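/- arXiv:2008.07147 — 2 statements merged into one kernel-verified Lean document; each statement's English description precedes it below -/
import Mathlib

section
/- Let q ∈ L²((0,1),ℂ), γ ∈ ℂ \ {0}, and a ∈ [0,1]. Then for every x ∈ [0,1] and every λ = ρ² ∈ ℂ, the Wronski-type determinant satisfies C(x,λ)·S'(x,λ) − C'(x,λ)·S(x,λ) = 1 − ∫₀^{a−x} q(a−t)·(sin(ρt)/ρ) dt, where the integral is the oriented integral (equal to −∫_{a−x}^{0} when x > a). -/
open MeasureTheory Complex Set Filter

/-- `sin(ρ s)/ρ`, interpreted as `s` when `ρ = 0`. -/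
noncomputable def sdiv (ρ s : ℂ) : ℂ := if ρ = 0 then s else Complex.sin (ρ * s) / ρ

/-- The solution `C(x, ρ²)` of the frozen-argument equation with `C(a) = 1`, `C'(a) = 0`. -/
noncomputable def Cfun (q : ℝ → ℂ) (a : ℝ) (ρ : ℂ) (x : ℝ) : ℂ :=
  Complex.cos (ρ * ((x : ℂ) - (a : ℂ))) + ∫ t in a..x, sdiv ρ ((x : ℂ) - (t : ℂ)) * q t

/-- The solution `S(x, ρ²)` with `S(a) = 0`, `S'(a) = 1`. -/
noncomputable def Sfun (a : ℝ) (ρ : ℂ) (x : ℝ) : ℂ := sdiv ρ ((x : ℂ) - (a : ℂ))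

/-- The derivative `C'(x, ρ²)`. -/
noncomputable def Cfun' (q : ℝ → ℂ) (a : ℝ) (ρ : ℂ) (x : ℝ) : ℂ :=
  -ρ * Complex.sin (ρ * ((x : ℂ) - (a : ℂ))) + ∫ t in a..x, Complex.cos (ρ * ((x : ℂ) - (t : ℂ))) * q t

/-- The derivative `S'(x, ρ²)`. -/
noncomputable def Sfun' (a : ℝ) (ρ : ℂ) (x : ℝ) : ℂ := Complex.cos (ρ * ((x : ℂ) - (a : ℂ)))

/-- The characteristic function of `L(q, a, γ)`, as a function of `ρ` (where `λ = ρ²`). -/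
noncomputable def charAux (q : ℝ → ℂ) (a : ℝ) (γ : ℂ) (ρ : ℂ) : ℂ :=
  (Cfun q a ρ 0 - γ * Cfun q a ρ 1) * (Sfun' a ρ 0 - γ * Sfun' a ρ 1)
    - (Sfun a ρ 0 - γ * Sfun a ρ 1) * (Cfun' q a ρ 0 - γ * Cfun' q a ρ 1)

/-- The characteristic function `Δ(λ)` of `L(q, a, γ)`; all entries are even in `ρ`,
so any square root of `λ` may be used. -/
noncomputable def charFun (q : ℝ → ℂ) (a : ℝ) (γ : ℂ) (lam : ℂ) : ℂ :=
  charAux q a γ (lam ^ (1/2 : ℂ))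

/-- `f` vanishes at `μ` to order exactly `m`. -/
def vanishesToOrder (f : ℂ → ℂ) (μ : ℂ) (m : ℕ) : Prop :=
  ∃ g : ℂ → ℂ, AnalyticAt ℂ g μ ∧ g μ ≠ 0 ∧ ∀ᶠ z in nhds μ, f z = (z - μ) ^ m * g z

/-- Two entire functions have the same zeros with the same multiplicities. -/
def sameSpectrum (f g : ℂ → ℂ) : Prop :=
  ∀ μ : ℂ, ∀ m : ℕ, vanishesToOrder f μ m ↔ vanishesToOrder g μ m

/-- `lam` enumerates the zeros of `f` with multiplicities: for every `μ` the order of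
vanishing of `f` at `μ` equals the number of indices `n` with `lam n = μ`. -/
def isSpectrum (f : ℂ → ℂ) (lam : ℕ → ℂ) : Prop :=
  ∀ μ : ℂ, vanishesToOrder f μ ({n : ℕ | lam n = μ}.ncard)

/-- The region in which the branch `α` is chosen. -/
def alphaRegion : Set ℂ :=
  {z | (0 ≤ z.re ∧ z.re ≤ 1 ∧ 0 ≤ z.im) ∨ (0 < z.re ∧ z.re < 1 ∧ z.im < 0)}

/-- `ρ⁰_{n,α}`: equals `(2k+α)π` for `n = 2k` and `(2k−α)π` for `n = 2k−1`. -/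
noncomputable def rho0 (α : ℂ) (n : ℕ) : ℂ :=
  if n % 2 = 0 then ((n : ℂ) + α) * (Real.pi : ℂ) else (((n : ℂ) + 1) - α) * (Real.pi : ℂ)

/-- The asymptotics `λ_{2k} = (2k+α)²π² + κ_{2k}`, `λ_{2k-1} = (2k-α)²π² + κ_{2k-1}`,
with `{κ_n} ∈ ℓ²`. -/
def spectralAsymptotics (α : ℂ) (lam : ℕ → ℂ) : Prop :=
  ∃ κ : ℕ → ℂ, (Summable fun n => ‖κ n‖ ^ 2) ∧ ∀ n, lam n = (rho0 α n) ^ 2 + κ n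

/-- The degenerate asymptotics: `λ_{2k} = (2k+α)²π² + κ_k` with `{κ_k} ∈ ℓ²`, while
`λ_{2k-1} = (2k-α)²π²` exactly. -/
def degenerateAsymptotics (α : ℂ) (lam : ℕ → ℂ) : Prop :=
  (∀ n, n % 2 = 1 → lam n = (rho0 α n) ^ 2) ∧
  ∃ κ : ℕ → ℂ, (Summable fun k => ‖κ k‖ ^ 2) ∧ ∀ k, lam (2 * k) = (rho0 α (2 * k)) ^ 2 + κ k

/-- The shifted potential `q_a` from Lemma 4 (for `a = 0` it is `q` itself on `(0,1)`). -/
noncomputable def qShift (q : ℝ → ℂ) (a : ℝ) (γ : ℂ) (x : ℝ) : ℂ :=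
  if x < 1 - a then q (x + a) else γ⁻¹ * q (x + a - 1)


lemma sdiv_identity (ρ u v : ℂ) :
    Complex.cos (ρ * u) * sdiv ρ v - sdiv ρ u * Complex.cos (ρ * v) = sdiv ρ (v - u) := by
  unfold _root_.sdiv
  split
  · next h => simp [h]
  · next h =>
    rw [mul_sub, Complex.sin_sub]
    field_simp

lemma sdiv_sq (ρ u : ℂ) :
    Complex.cos (ρ * u) * Complex.cos (ρ * u) + ρ * Complex.sin (ρ * u) * sdiv ρ u = 1 := by
  unfold _root_.sdiv
  split
  · next h => simp [h]
  · next h =>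
    field_simp
    linear_combination Complex.cos_sq_add_sin_sq (ρ * u)

lemma sdiv_continuous (ρ c : ℂ) : Continuous fun t : ℝ => sdiv ρ (c - (t : ℂ)) := by
  unfold _root_.sdiv
  split
  · fun_prop
  · fun_prop

/-- the Wronski-type determinant `W(x,λ) = C S' - C' S` equals
`1 - ∫₀^{a-x} q(a-t)·(sin ρt)/ρ dt` (oriented integral). -/
theorem wronskian_formula
    (q : ℝ → ℂ) (hq : MemLp q 2 (volume.restrict (Set.Ioo (0:ℝ) 1)))
    (γ : ℂ) (hγ : γ ≠ 0) (a : ℝ) (ha : a ∈ Set.Icc (0:ℝ) 1) :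
    ∀ x ∈ Set.Icc (0:ℝ) 1, ∀ ρ : ℂ,
      Cfun q a ρ x * Sfun' a ρ x - Cfun' q a ρ x * Sfun a ρ x =
        1 - ∫ t in (0:ℝ)..(a - x), q (a - t) * sdiv ρ (t : ℂ) := by
  intro x hx ρ
  have hqInt : IntegrableOn q (Set.Icc (0:ℝ) 1) := by
    rw [integrableOn_Icc_iff_integrableOn_Ioo]
    exact hq.integrable (by norm_num)
  have hsub : Set.uIoc a x ⊆ Set.Icc 0 1 :=
    Set.uIoc_subset_uIcc.trans (Set.uIcc_subset_Icc ha hx)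
  have hqiv : IntervalIntegrable q volume a x := by
    rw [intervalIntegrable_iff]
    exact hqInt.mono_set hsub
  have hmul : ∀ f : ℝ → ℂ, Continuous f →
      IntervalIntegrable (fun t => f t * q t) volume a x :=
    fun f hf => hqiv.continuousOn_mul hf.continuousOn
  have h1 : IntervalIntegrable (fun t => sdiv ρ ((x:ℂ) - (t:ℂ)) * q t) volume a x :=
    hmul _ (sdiv_continuous ρ x)
  have h2 : IntervalIntegrable (fun t => Complex.cos (ρ * ((x:ℂ) - (t:ℂ))) * q t) volume a x :=
    hmul _ (by fun_prop)
  unfold Cfun Sfun Cfun' Sfun'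
  have e1 : Complex.cos (ρ * ((x:ℂ) - (a:ℂ))) * ∫ t in a..x, sdiv ρ ((x:ℂ) - (t:ℂ)) * q t
      = ∫ t in a..x, Complex.cos (ρ * ((x:ℂ) - (a:ℂ))) * (sdiv ρ ((x:ℂ) - (t:ℂ)) * q t) :=
    (intervalIntegral.integral_const_mul _ _).symm
  have e2 : sdiv ρ ((x:ℂ) - (a:ℂ)) * ∫ t in a..x, Complex.cos (ρ * ((x:ℂ) - (t:ℂ))) * q t
      = ∫ t in a..x, sdiv ρ ((x:ℂ) - (a:ℂ)) * (Complex.cos (ρ * ((x:ℂ) - (t:ℂ))) * q t) :=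
    (intervalIntegral.integral_const_mul _ _).symm
  have key : Complex.cos (ρ * ((x:ℂ) - (a:ℂ))) * (∫ t in a..x, sdiv ρ ((x:ℂ) - (t:ℂ)) * q t)
      - sdiv ρ ((x:ℂ) - (a:ℂ)) * ∫ t in a..x, Complex.cos (ρ * ((x:ℂ) - (t:ℂ))) * q t
      = ∫ t in a..x, sdiv ρ ((a:ℂ) - (t:ℂ)) * q t := by
    rw [e1, e2, ← intervalIntegral.integral_sub (h1.const_mul _) (h2.const_mul _)]
    apply intervalIntegral.integral_congr
    intro t _
    have h := sdiv_identity ρ ((x:ℂ) - (a:ℂ)) ((x:ℂ) - (t:ℂ))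
    have hv : (x:ℂ) - (t:ℂ) - ((x:ℂ) - (a:ℂ)) = (a:ℂ) - (t:ℂ) := by ring
    rw [hv] at h
    simp only
    linear_combination q t * h
  have hchg : (∫ t in a..x, sdiv ρ ((a:ℂ) - (t:ℂ)) * q t)
      = - ∫ t in (0:ℝ)..(a - x), q (a - t) * sdiv ρ (t : ℂ) := by
    have hcv := intervalIntegral.integral_comp_sub_left
      (a := a) (b := x) (fun t : ℝ => q (a - t) * sdiv ρ (t : ℂ)) a
    rw [sub_self] at hcv
    rw [intervalIntegral.integral_symm (a - x) 0, neg_neg, ← hcv]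
    apply intervalIntegral.integral_congr
    intro t _
    simp only [sub_sub_cancel]
    push_cast
    ring
  have hsq := sdiv_sq ρ ((x:ℂ) - (a:ℂ))
  linear_combination hsq + key + hchg
end

section
/- Let q ∈ L²((0,1),ℂ), γ ∈ ℂ \ {0}, and a ∈ (0,1]. Then the spectrum of L(q,a,γ) coincides, with multiplicities, with the spectrum of L(q_a,0,γ): the characteristic functions of these two problems have the same order of vanishing at every point of ℂ. -/
open MeasureTheory Complex Set Filter

open intervalIntegral
lemma sdiv_zero' (ρ : ℂ) : sdiv ρ 0 = 0 := by unfold _root_.sdiv; split_ifs <;> simp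

lemma sdiv_neg' (ρ s : ℂ) : sdiv ρ (-s) = -sdiv ρ s := by
  unfold _root_.sdiv; split_ifs with h
  · rfl
  · rw [mul_neg, Complex.sin_neg, neg_div]

lemma sdiv_add' (ρ s u : ℂ) :
    sdiv ρ (s + u) = sdiv ρ s * Complex.cos (ρ * u) + Complex.cos (ρ * s) * sdiv ρ u := by
  unfold _root_.sdiv; split_ifs with h
  · simp [h]
  · rw [mul_add, Complex.sin_add]; field_simp

lemma cos_madd (ρ s u : ℂ) :
    Complex.cos (ρ * (s + u))
      = Complex.cos (ρ * s) * Complex.cos (ρ * u) - ρ ^ 2 * (sdiv ρ s * sdiv ρ u) := by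
  unfold _root_.sdiv; split_ifs with h
  · simp [h]
  · rw [mul_add, Complex.cos_add]; field_simp

lemma rho_sin (ρ s : ℂ) : ρ * Complex.sin (ρ * s) = ρ ^ 2 * sdiv ρ s := by
  unfold _root_.sdiv; split_ifs with h
  · simp [h]
  · field_simp

lemma sdiv_pyth (ρ s : ℂ) : Complex.cos (ρ * s) ^ 2 + ρ ^ 2 * sdiv ρ s ^ 2 = 1 := by
  unfold _root_.sdiv; split_ifs with h
  · simp [h]
  · have h2 := Complex.sin_sq_add_cos_sq (ρ * s)
    field_simp
    linear_combination h2

lemma continuous_sdiv_comp {f : ℝ → ℂ} (hf : Continuous f) (ρ : ℂ) :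
    Continuous fun t => sdiv ρ (f t) := by
  unfold _root_.sdiv; split_ifs with h
  · exact hf
  · exact (Complex.continuous_sin.comp (continuous_const.mul hf)).div_const ρ

lemma scalar_identity (ca sa cb sb A B D E γ r : ℂ) (hinv : γ * γ⁻¹ = 1)
    (hP1 : ca ^ 2 + r * sa ^ 2 = 1) :
    (ca + A - γ * (cb + D)) * (ca - γ * cb)
      - (-sa - γ * sb) * (r * sa - B - γ * (-(r * sb) + E))
    = (1 - γ * ((cb * ca - r * (sb * sa)) + (ca * D + sa * E + γ⁻¹ * (sa * B - ca * A))))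
        * (1 - γ * (cb * ca - r * (sb * sa)))
      - (0 - γ * (sb * ca + cb * sa))
        * (0 - γ * (-(r * (sb * ca + cb * sa))
            + (ca * E - r * (sa * D) + γ⁻¹ * (ca * B + r * (sa * A))))) := by
  linear_combination
    (1 + γ ^ 2 * sb * E + γ * sb * B - r * γ ^ 2 * sb ^ 2 - γ ^ 2 * cb * D + γ * cb * A
        - γ ^ 2 * cb ^ 2) * hP1
      + (sa * B + r * γ * sa ^ 2 * sb * B + r * γ * cb * sa ^ 2 * A - ca * A
        + γ * ca ^ 2 * sb * B + γ * ca ^ 2 * cb * A) * hinv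

lemma shift_integral (q : ℝ → ℂ) (γ : ℂ) (a : ℝ) (ha : a ∈ Set.Ioc (0:ℝ) 1)
    (hq : IntervalIntegrable q volume 0 1) (K : ℝ → ℂ) (hK : Continuous K) :
    (∫ t in (0:ℝ)..1, K t * qShift q a γ t)
      = (∫ t in a..1, K (t - a) * q t) + γ⁻¹ * ∫ t in (0:ℝ)..a, K (t + 1 - a) * q t := by
  obtain ⟨ha0, ha1⟩ := ha
  have h1a0 : (0:ℝ) ≤ 1 - a := by linarith
  have h1a1 : (1:ℝ) - a ≤ 1 := by linarith
  have hsub : ∀ c d : ℝ, 0 ≤ c → c ≤ d → d ≤ 1 → IntervalIntegrable q volume c d := by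
    intro c d h1 h2 h3
    apply hq.mono_set
    rw [Set.uIcc_of_le h2, Set.uIcc_of_le (by norm_num : (0:ℝ) ≤ 1)]
    exact Set.Icc_subset_Icc h1 h3
  have hI1 : IntervalIntegrable (fun t => K t * q (t + a)) volume 0 (1 - a) := by
    have h := ((hsub a 1 (le_of_lt ha0) ha1 le_rfl).comp_add_right a).continuousOn_mul
      hK.continuousOn
    simpa using h
  have hI2 : IntervalIntegrable (fun t => K t * (γ⁻¹ * q (t + (a - 1)))) volume (1 - a) 1 := by
    have h := (((hsub 0 a le_rfl (le_of_lt ha0) ha1).comp_add_right (a - 1)).const_mul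
      γ⁻¹).continuousOn_mul hK.continuousOn
    have e : (0:ℝ) - (a - 1) = 1 - a := by ring
    have e2 : a - (a - 1) = 1 := by ring
    rw [e, e2] at h
    exact h
  have hne : ∀ᵐ t : ℝ ∂volume, t ≠ 1 - a := by
    refine ae_iff.2 ?_
    have : {t : ℝ | ¬ t ≠ 1 - a} = {1 - a} := by ext t; simp
    rw [this]; exact measure_singleton _
  have hae1 : ∀ᵐ t : ℝ ∂volume, t ∈ Set.Ioc (0:ℝ) (1 - a) →
      K t * qShift q a γ t = K t * q (t + a) := by
    filter_upwards [hne] with t ht htm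
    have hlt : t < 1 - a := lt_of_le_of_ne htm.2 ht
    simp [qShift, hlt]
  have hae2 : Set.EqOn (fun t => K t * qShift q a γ t)
      (fun t => K t * (γ⁻¹ * q (t + (a - 1)))) (Set.uIcc (1 - a) 1) := by
    intro t htm
    rw [Set.uIcc_of_le h1a1] at htm
    have : ¬ t < 1 - a := not_lt.2 htm.1
    simp only [qShift, this, if_false]
    ring_nf
  have hI1' : IntervalIntegrable (fun t => K t * qShift q a γ t) volume 0 (1 - a) := by
    rw [intervalIntegrable_iff_integrableOn_Ioc_of_le h1a0] at hI1 ⊢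
    refine hI1.congr ?_
    refine ((ae_restrict_iff' measurableSet_Ioc).2 ?_)
    filter_upwards [hae1] with t h1 h2
    exact (h1 h2).symm
  have hI2' : IntervalIntegrable (fun t => K t * qShift q a γ t) volume (1 - a) 1 := by
    rw [intervalIntegrable_iff_integrableOn_Ioc_of_le h1a1] at hI2 ⊢
    refine hI2.congr ?_
    refine ((ae_restrict_iff' measurableSet_Ioc).2 ?_)
    refine Filter.Eventually.of_forall fun t h2 => ?_
    exact (hae2 (by rw [Set.uIcc_of_le h1a1]; exact Set.Ioc_subset_Icc_self h2)).symm
  rw [← integral_add_adjacent_intervals hI1' hI2']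
  have e1 : (∫ t in (0:ℝ)..(1 - a), K t * qShift q a γ t) = ∫ t in a..1, K (t - a) * q t := by
    rw [integral_congr_ae (by rwa [Set.uIoc_of_le h1a0] : ∀ᵐ t : ℝ ∂volume,
      t ∈ Set.uIoc (0:ℝ) (1 - a) → K t * qShift q a γ t = K t * q (t + a))]
    have h := intervalIntegral.integral_comp_add_right (a := (0:ℝ)) (b := 1 - a)
      (fun s => K (s - a) * q s) a
    simp only [add_sub_cancel_right] at h
    rw [h]
    norm_num
  have e2 : (∫ t in (1 - a)..1, K t * qShift q a γ t)
      = γ⁻¹ * ∫ t in (0:ℝ)..a, K (t + 1 - a) * q t := by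
    rw [integral_congr hae2]
    have h := intervalIntegral.integral_comp_add_right (a := (1 - a : ℝ)) (b := 1)
      (fun s => γ⁻¹ * (K (s - (a - 1)) * q s)) (a - 1)
    simp only [add_sub_cancel_right] at h
    have e : (1:ℝ) - a + (a - 1) = 0 := by ring
    have e' : (1:ℝ) + (a - 1) = a := by ring
    rw [e, e'] at h
    calc (∫ t in (1 - a:ℝ)..1, K t * (γ⁻¹ * q (t + (a - 1))))
        = ∫ t in (1 - a:ℝ)..1, γ⁻¹ * (K t * q (t + (a - 1))) := by
          congr 1; funext t; ring
      _ = ∫ s in (0:ℝ)..a, γ⁻¹ * (K (s - (a - 1)) * q s) := h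
      _ = γ⁻¹ * ∫ s in (0:ℝ)..a, K (s + 1 - a) * q s := by
          rw [intervalIntegral.integral_const_mul]
          congr 1; congr 1; funext s; congr 2; ring
  rw [e1, e2]

lemma charAux_shift (q : ℝ → ℂ) (hq : IntervalIntegrable q volume 0 1)
    (γ : ℂ) (hγ : γ ≠ 0) (a : ℝ) (ha : a ∈ Set.Ioc (0:ℝ) 1) (ρ : ℂ) :
    charAux q a γ ρ = charAux (qShift q a γ) 0 γ ρ := by
  obtain ⟨ha0, ha1⟩ := ha
  have hsub : ∀ c d : ℝ, 0 ≤ c → c ≤ d → d ≤ 1 → IntervalIntegrable q volume c d := by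
    intro c d h1 h2 h3
    apply hq.mono_set
    rw [Set.uIcc_of_le h2, Set.uIcc_of_le (by norm_num : (0:ℝ) ≤ 1)]
    exact Set.Icc_subset_Icc h1 h3
  -- continuity of kernels
  have hk1 : Continuous fun t : ℝ => sdiv ρ (1 - (t:ℂ)) :=
    continuous_sdiv_comp (by continuity) ρ
  have hk2 : Continuous fun t : ℝ => Complex.cos (ρ * (1 - (t:ℂ))) := by
    apply Complex.continuous_cos.comp; continuity
  have hk3 : Continuous fun t : ℝ => sdiv ρ ((t:ℂ)) :=
    continuous_sdiv_comp Complex.continuous_ofReal ρ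
  have hk4 : Continuous fun t : ℝ => Complex.cos (ρ * (t:ℂ)) := by
    apply Complex.continuous_cos.comp; continuity
  -- integrability of the base integrands
  have hAi : IntervalIntegrable (fun t : ℝ => sdiv ρ ((t:ℂ)) * q t) volume 0 a :=
    (hsub 0 a le_rfl (le_of_lt ha0) ha1).continuousOn_mul hk3.continuousOn
  have hBi : IntervalIntegrable (fun t : ℝ => Complex.cos (ρ * (t:ℂ)) * q t) volume 0 a :=
    (hsub 0 a le_rfl (le_of_lt ha0) ha1).continuousOn_mul hk4.continuousOn
  have hDi : IntervalIntegrable (fun t : ℝ => sdiv ρ (1 - (t:ℂ)) * q t) volume a 1 :=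
    (hsub a 1 (le_of_lt ha0) ha1 le_rfl).continuousOn_mul hk1.continuousOn
  have hEi : IntervalIntegrable (fun t : ℝ => Complex.cos (ρ * (1 - (t:ℂ))) * q t) volume a 1 :=
    (hsub a 1 (le_of_lt ha0) ha1 le_rfl).continuousOn_mul hk2.continuousOn
  -- left-hand components
  have hC0 : Cfun q a ρ 0
      = Complex.cos (ρ * (a:ℂ)) + ∫ t in (0:ℝ)..a, sdiv ρ ((t:ℂ)) * q t := by
    unfold Cfun
    push_cast
    rw [zero_sub, mul_neg, Complex.cos_neg, intervalIntegral.integral_symm,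
      intervalIntegral.integral_congr
        (g := fun t : ℝ => -(sdiv ρ ((t:ℂ)) * q t))
        (fun t _ => by rw [zero_sub, sdiv_neg']; ring),
      intervalIntegral.integral_neg, neg_neg]
  have hC1 : Cfun q a ρ 1
      = Complex.cos (ρ * (1 - (a:ℂ))) + ∫ t in a..(1:ℝ), sdiv ρ (1 - (t:ℂ)) * q t := by
    unfold Cfun; push_cast; rfl
  have hS0 : Sfun a ρ 0 = -sdiv ρ ((a:ℂ)) := by
    unfold Sfun; push_cast; rw [zero_sub, sdiv_neg']
  have hS1 : Sfun a ρ 1 = sdiv ρ (1 - (a:ℂ)) := by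
    unfold Sfun; push_cast; rfl
  have hSp0 : Sfun' a ρ 0 = Complex.cos (ρ * (a:ℂ)) := by
    unfold Sfun'; push_cast; rw [zero_sub, mul_neg, Complex.cos_neg]
  have hSp1 : Sfun' a ρ 1 = Complex.cos (ρ * (1 - (a:ℂ))) := by
    unfold Sfun'; push_cast; rfl
  have hCp0 : Cfun' q a ρ 0
      = ρ ^ 2 * sdiv ρ ((a:ℂ)) - ∫ t in (0:ℝ)..a, Complex.cos (ρ * (t:ℂ)) * q t := by
    unfold Cfun'
    push_cast
    rw [intervalIntegral.integral_symm,
      intervalIntegral.integral_congr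
        (g := fun t : ℝ => Complex.cos (ρ * (t:ℂ)) * q t)
        (fun t _ => by rw [zero_sub, mul_neg, Complex.cos_neg])]
    rw [zero_sub, mul_neg, Complex.sin_neg]
    linear_combination rho_sin ρ (a:ℂ)
  have hCp1 : Cfun' q a ρ 1
      = -(ρ ^ 2 * sdiv ρ (1 - (a:ℂ)))
        + ∫ t in a..(1:ℝ), Complex.cos (ρ * (1 - (t:ℂ))) * q t := by
    unfold Cfun'
    push_cast
    linear_combination -(rho_sin ρ (1 - (a:ℂ)))
  -- right-hand side: trivial components at x = 0
  have hR0 : Cfun (qShift q a γ) 0 ρ 0 = 1 := by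
    unfold Cfun; simp
  have hRS0 : Sfun 0 ρ 0 = 0 := by
    unfold Sfun; simp [sdiv_zero']
  have hRSp0 : Sfun' 0 ρ 0 = 1 := by
    unfold Sfun'; simp
  have hRCp0 : Cfun' (qShift q a γ) 0 ρ 0 = 0 := by
    unfold Cfun'; simp
  -- expansions of cos ρ and sdiv ρ 1
  have hcos1 : Complex.cos (ρ * 1)
      = Complex.cos (ρ * (1 - (a:ℂ))) * Complex.cos (ρ * (a:ℂ))
        - ρ ^ 2 * (sdiv ρ (1 - (a:ℂ)) * sdiv ρ ((a:ℂ))) := by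
    have h := cos_madd ρ (1 - (a:ℂ)) ((a:ℂ))
    rw [show (1 - (a:ℂ)) + (a:ℂ) = 1 by ring] at h
    exact h
  have hsdiv1 : sdiv ρ 1
      = sdiv ρ (1 - (a:ℂ)) * Complex.cos (ρ * (a:ℂ))
        + Complex.cos (ρ * (1 - (a:ℂ))) * sdiv ρ ((a:ℂ)) := by
    have h := sdiv_add' ρ (1 - (a:ℂ)) ((a:ℂ))
    rw [show (1 - (a:ℂ)) + (a:ℂ) = 1 by ring] at h
    exact h
  have hRS1 : Sfun 0 ρ 1
      = sdiv ρ (1 - (a:ℂ)) * Complex.cos (ρ * (a:ℂ))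
        + Complex.cos (ρ * (1 - (a:ℂ))) * sdiv ρ ((a:ℂ)) := by
    unfold Sfun; push_cast; rw [sub_zero, hsdiv1]
  have hRSp1 : Sfun' 0 ρ 1
      = Complex.cos (ρ * (1 - (a:ℂ))) * Complex.cos (ρ * (a:ℂ))
        - ρ ^ 2 * (sdiv ρ (1 - (a:ℂ)) * sdiv ρ ((a:ℂ))) := by
    unfold Sfun'; push_cast; rw [sub_zero, hcos1]
  -- the two shifted integrals
  have hCint : (∫ t in (0:ℝ)..1, sdiv ρ (1 - (t:ℂ)) * qShift q a γ t)
      = Complex.cos (ρ * (a:ℂ)) * (∫ t in a..(1:ℝ), sdiv ρ (1 - (t:ℂ)) * q t)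
        + sdiv ρ ((a:ℂ)) * (∫ t in a..(1:ℝ), Complex.cos (ρ * (1 - (t:ℂ))) * q t)
        + γ⁻¹ * (sdiv ρ ((a:ℂ)) * (∫ t in (0:ℝ)..a, Complex.cos (ρ * (t:ℂ)) * q t)
            - Complex.cos (ρ * (a:ℂ)) * (∫ t in (0:ℝ)..a, sdiv ρ ((t:ℂ)) * q t)) := by
    rw [shift_integral q γ a ⟨ha0, ha1⟩ hq (fun t : ℝ => sdiv ρ (1 - (t:ℂ))) hk1]
    congr 1
    · rw [intervalIntegral.integral_congr
        (g := fun t : ℝ => Complex.cos (ρ * (a:ℂ)) * (sdiv ρ (1 - (t:ℂ)) * q t)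
          + sdiv ρ ((a:ℂ)) * (Complex.cos (ρ * (1 - (t:ℂ))) * q t))
        (fun t _ => by
          show sdiv ρ (1 - ((t - a : ℝ) : ℂ)) * q t = _
          push_cast
          rw [show (1:ℂ) - ((t:ℂ) - (a:ℂ)) = (1 - (t:ℂ)) + (a:ℂ) by ring, sdiv_add']
          ring)]
      rw [intervalIntegral.integral_add (hDi.const_mul _) (hEi.const_mul _),
        intervalIntegral.integral_const_mul, intervalIntegral.integral_const_mul]
    · congr 1
      rw [intervalIntegral.integral_congr
        (g := fun t : ℝ => sdiv ρ ((a:ℂ)) * (Complex.cos (ρ * (t:ℂ)) * q t)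
          - Complex.cos (ρ * (a:ℂ)) * (sdiv ρ ((t:ℂ)) * q t))
        (fun t _ => by
          show sdiv ρ (1 - ((t + 1 - a : ℝ) : ℂ)) * q t = _
          push_cast
          rw [show (1:ℂ) - ((t:ℂ) + 1 - (a:ℂ)) = (a:ℂ) + -(t:ℂ) by ring, sdiv_add',
            mul_neg, Complex.cos_neg, sdiv_neg']
          ring)]
      rw [intervalIntegral.integral_sub (hBi.const_mul _) (hAi.const_mul _),
        intervalIntegral.integral_const_mul, intervalIntegral.integral_const_mul]
  have hCpint : (∫ t in (0:ℝ)..1, Complex.cos (ρ * (1 - (t:ℂ))) * qShift q a γ t)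
      = Complex.cos (ρ * (a:ℂ)) * (∫ t in a..(1:ℝ), Complex.cos (ρ * (1 - (t:ℂ))) * q t)
        - ρ ^ 2 * (sdiv ρ ((a:ℂ)) * (∫ t in a..(1:ℝ), sdiv ρ (1 - (t:ℂ)) * q t))
        + γ⁻¹ * (Complex.cos (ρ * (a:ℂ)) * (∫ t in (0:ℝ)..a, Complex.cos (ρ * (t:ℂ)) * q t)
            + ρ ^ 2 * (sdiv ρ ((a:ℂ)) * (∫ t in (0:ℝ)..a, sdiv ρ ((t:ℂ)) * q t))) := by
    rw [shift_integral q γ a ⟨ha0, ha1⟩ hq (fun t : ℝ => Complex.cos (ρ * (1 - (t:ℂ)))) hk2]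
    congr 1
    · rw [intervalIntegral.integral_congr
        (g := fun t : ℝ => Complex.cos (ρ * (a:ℂ)) * (Complex.cos (ρ * (1 - (t:ℂ))) * q t)
          - ρ ^ 2 * (sdiv ρ ((a:ℂ)) * (sdiv ρ (1 - (t:ℂ)) * q t)))
        (fun t _ => by
          show Complex.cos (ρ * (1 - ((t - a : ℝ) : ℂ))) * q t = _
          push_cast
          rw [show (1:ℂ) - ((t:ℂ) - (a:ℂ)) = (1 - (t:ℂ)) + (a:ℂ) by ring, cos_madd]
          ring)]
      rw [intervalIntegral.integral_sub (hEi.const_mul _) ((hDi.const_mul _).const_mul _),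
        intervalIntegral.integral_const_mul, intervalIntegral.integral_const_mul,
        intervalIntegral.integral_const_mul]
    · congr 1
      rw [intervalIntegral.integral_congr
        (g := fun t : ℝ => Complex.cos (ρ * (a:ℂ)) * (Complex.cos (ρ * (t:ℂ)) * q t)
          + ρ ^ 2 * (sdiv ρ ((a:ℂ)) * (sdiv ρ ((t:ℂ)) * q t)))
        (fun t _ => by
          show Complex.cos (ρ * (1 - ((t + 1 - a : ℝ) : ℂ))) * q t = _
          push_cast
          rw [show (1:ℂ) - ((t:ℂ) + 1 - (a:ℂ)) = (a:ℂ) + -(t:ℂ) by ring, cos_madd,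
            mul_neg, Complex.cos_neg, sdiv_neg']
          ring)]
      rw [intervalIntegral.integral_add (hBi.const_mul _) ((hAi.const_mul _).const_mul _),
        intervalIntegral.integral_const_mul, intervalIntegral.integral_const_mul,
        intervalIntegral.integral_const_mul]
  -- the nontrivial right-hand components
  have hR1 : Cfun (qShift q a γ) 0 ρ 1
      = (Complex.cos (ρ * (1 - (a:ℂ))) * Complex.cos (ρ * (a:ℂ))
          - ρ ^ 2 * (sdiv ρ (1 - (a:ℂ)) * sdiv ρ ((a:ℂ))))
        + (Complex.cos (ρ * (a:ℂ)) * (∫ t in a..(1:ℝ), sdiv ρ (1 - (t:ℂ)) * q t)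
          + sdiv ρ ((a:ℂ)) * (∫ t in a..(1:ℝ), Complex.cos (ρ * (1 - (t:ℂ))) * q t)
          + γ⁻¹ * (sdiv ρ ((a:ℂ)) * (∫ t in (0:ℝ)..a, Complex.cos (ρ * (t:ℂ)) * q t)
            - Complex.cos (ρ * (a:ℂ)) * (∫ t in (0:ℝ)..a, sdiv ρ ((t:ℂ)) * q t))) := by
    unfold Cfun
    push_cast
    rw [sub_zero, hCint, hcos1]
  have hRCp1 : Cfun' (qShift q a γ) 0 ρ 1
      = -(ρ ^ 2 * (sdiv ρ (1 - (a:ℂ)) * Complex.cos (ρ * (a:ℂ))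
          + Complex.cos (ρ * (1 - (a:ℂ))) * sdiv ρ ((a:ℂ))))
        + (Complex.cos (ρ * (a:ℂ)) * (∫ t in a..(1:ℝ), Complex.cos (ρ * (1 - (t:ℂ))) * q t)
          - ρ ^ 2 * (sdiv ρ ((a:ℂ)) * (∫ t in a..(1:ℝ), sdiv ρ (1 - (t:ℂ)) * q t))
          + γ⁻¹ * (Complex.cos (ρ * (a:ℂ)) * (∫ t in (0:ℝ)..a, Complex.cos (ρ * (t:ℂ)) * q t)
            + ρ ^ 2 * (sdiv ρ ((a:ℂ)) * (∫ t in (0:ℝ)..a, sdiv ρ ((t:ℂ)) * q t)))) := by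
    unfold Cfun'
    push_cast
    rw [sub_zero]
    rw [hCpint]
    rw [← hsdiv1]
    linear_combination -(rho_sin ρ 1)
  -- assemble
  unfold charAux
  rw [hC0, hC1, hS0, hS1, hSp0, hSp1, hCp0, hCp1, hR0, hRS0, hRSp0, hRCp0, hRS1, hRSp1,
    hR1, hRCp1]
  exact scalar_identity _ _ _ _ _ _ _ _ γ (ρ ^ 2) (mul_inv_cancel₀ hγ) (sdiv_pyth ρ ((a:ℂ)))

/-- Lemma 4: the spectrum of `L(q, a, γ)` coincides, with multiplicities,
with the spectrum of `L(q_a, 0, γ)`. -/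
theorem spectrum_shift_invariance
    (q : ℝ → ℂ) (hq : MemLp q 2 (volume.restrict (Set.Ioo (0:ℝ) 1)))
    (γ : ℂ) (hγ : γ ≠ 0) (a : ℝ) (ha : a ∈ Set.Ioc (0:ℝ) 1) :
    sameSpectrum (charFun q a γ) (charFun (qShift q a γ) 0 γ) := by
  have hQ : IntervalIntegrable q volume 0 1 := by
    haveI : IsFiniteMeasure (volume.restrict (Set.Ioo (0:ℝ) 1)) :=
      ⟨by rw [Measure.restrict_apply_univ]; simp [Real.volume_Ioo]⟩
    have h1 : Integrable q (volume.restrict (Set.Ioo (0:ℝ) 1)) := hq.integrable one_le_two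
    have h2 : Integrable q (volume.restrict (Set.Ioc (0:ℝ) 1)) := by
      rwa [← Measure.restrict_congr_set Ioo_ae_eq_Ioc]
    rw [intervalIntegrable_iff_integrableOn_Ioc_of_le (by norm_num)]
    exact h2
  have hfun : charFun q a γ = charFun (qShift q a γ) 0 γ :=
    funext fun lam => charAux_shift q hQ γ hγ a ha _
  rw [hfun]
  intro μ m
  exact Iff.rfl
end
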